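/- Let n ≥ 2 and 1 ≤ i ≤ n. The map sending I_n + A to I_{n−1} + A_{i,i}, where A_{i,i} is the (n−1)×(n−1) minor of A obtained by deleting the i-th row and i-th column, is a group isomorphism from IGL_{n−1,i} onto the congruence subgroup GL_{n−1}(R_n, σ_iR_n) = {B ∈ GL_{n−1}(R_n) : every entry of B − I_{n−1} lies in σ_iR_n}. -/

import Mathlib

noncomputable section

open Matrix

/-- The Laurent polynomial ring `ℤ[x₁^{±1},…,x_n^{±1}]`, realized as the group
algebra of the free abelian group `ℤⁿ` over `ℤ`. -/
abbrev LaurentR (n : ℕ) : Type := AddMonoidAlgebra ℤ (Fin n →₀ ℤ)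

/-- `x_i` as a unit of `LaurentR n`. -/
def Xu {n : ℕ} (i : Fin n) : (LaurentR n)ˣ where
  val := AddMonoidAlgebra.single (Finsupp.single i 1) 1
  inv := AddMonoidAlgebra.single (-Finsupp.single i 1) 1
  val_inv := by
    rw [AddMonoidAlgebra.single_mul_single]
    simp [AddMonoidAlgebra.one_def]
  inv_val := by
    rw [AddMonoidAlgebra.single_mul_single]
    simp [AddMonoidAlgebra.one_def]

/-- `x_i` as an element of `LaurentR n`. -/
def Xv {n : ℕ} (i : Fin n) : LaurentR n := (Xu i : LaurentR n)

/-- `σ_i = x_i - 1`. -/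
def sg {n : ℕ} (i : Fin n) : LaurentR n := Xv i - 1

/-- The vector `σ⃗`. -/
def sgVec (n : ℕ) : Fin n → LaurentR n := fun i => sg i

/-- `μ_{r,m} = 1 + x_r + ⋯ + x_r^{m-1}`. -/
def muv {n : ℕ} (r : Fin n) (m : ℕ) : LaurentR n := ∑ i ∈ Finset.range m, Xv r ^ i

/-- The augmentation ideal `𝔄_n = Σ σ_i R_n`. -/
def augI (n : ℕ) : Ideal (LaurentR n) := Ideal.span (Set.range (sgVec n))

/-- The ideal `m·R_n`. -/
def OI (n m : ℕ) : Ideal (LaurentR n) := Ideal.span {(m : LaurentR n)}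

/-- The ideal `H_{n,m} = Σ_r (x_r^m − 1)R_n + mR_n`. -/
def HI (n m : ℕ) : Ideal (LaurentR n) :=
  Ideal.span (Set.range (fun r : Fin n => Xv r ^ m - 1) ∪ {(m : LaurentR n)})

/-- `IA_n = {A ∈ GL_n(R_n) : A·σ⃗ = σ⃗}` as a subgroup of `GL_n(R_n)`. -/
def IAn (n : ℕ) : Subgroup (GL (Fin n) (LaurentR n)) where
  carrier := {g | (g : Matrix (Fin n) (Fin n) (LaurentR n)) *ᵥ sgVec n = sgVec n}
  one_mem' := by simp
  mul_mem' := by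
    intro a b ha hb
    simp only [Set.mem_setOf_eq, Units.val_mul] at *
    rw [← Matrix.mulVec_mulVec, hb, ha]
  inv_mem' := by
    intro a ha
    simp only [Set.mem_setOf_eq] at *
    have h : ((a⁻¹ : GL (Fin n) (LaurentR n)) : Matrix (Fin n) (Fin n) (LaurentR n)) *ᵥ
        ((a : Matrix (Fin n) (Fin n) (LaurentR n)) *ᵥ sgVec n) = sgVec n := by
      rw [Matrix.mulVec_mulVec, ← Units.val_mul, inv_mul_cancel, Units.val_one,
        Matrix.one_mulVec]
    rw [ha] at h
    exact h

/-- The underlying matrix of an element of `IA_n`. -/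
def matOf {n : ℕ} (g : IAn n) : Matrix (Fin n) (Fin n) (LaurentR n) :=
  ((g : GL (Fin n) (LaurentR n)) : Matrix (Fin n) (Fin n) (LaurentR n))

/-- The principal congruence subgroup `IG_{n,m}` (as a subset of `IA_n`). -/
def IGnm (n m : ℕ) : Set (IAn n) := {g | ∀ k l, (matOf g - 1) k l ∈ HI n m}

/-- `IA_n^m`: the subgroup of `IA_n` generated by all `m`-th powers. -/
def IApow (n m : ℕ) : Subgroup (IAn n) := Subgroup.closure (Set.range fun g : IAn n => g ^ m)


/-- `ISL_{n−1,i}(H)` for `n = k+1`: elements `I + A` of `IA_n` whose `i`-th row of `A`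
vanishes, all entries of the minor `A_{i,i}` lie in `σ_iR_n ∩ H`, and
`det(I_{n−1} + A_{i,i}) = 1`. -/
def ISL {k : ℕ} (i : Fin (k + 1)) (H : Ideal (LaurentR (k + 1))) : Set (IAn (k + 1)) :=
  {g | (∀ l, (matOf g - 1) i l = 0) ∧
    (∀ a b : Fin k, (matOf g - 1) (i.succAbove a) (i.succAbove b) ∈
      Ideal.span {sg i} ⊓ H) ∧
    ((matOf g).submatrix i.succAbove i.succAbove).det = 1}

/-- `IGL_{n−1,i}` for `n = k+1`: elements `I + A` of `IA_n` whose `i`-th row of `A`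
vanishes and all entries of the minor `A_{i,i}` lie in `σ_iR_n`. -/
def IGLset {k : ℕ} (i : Fin (k + 1)) : Set (IAn (k + 1)) :=
  {g | (∀ l, (matOf g - 1) i l = 0) ∧
    ∀ a b : Fin k, (matOf g - 1) (i.succAbove a) (i.succAbove b) ∈ Ideal.span {sg i}}

/-- The elementary matrix `I_d + r·E_{a,b}` (`a ≠ b`) as an element of `GL_d(A)`. -/
def elemGL {d : ℕ} {A : Type*} [CommRing A] (a b : Fin d) (hab : a ≠ b) (r : A) :
    GL (Fin d) A where
  val := 1 + Matrix.single a b r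
  inv := 1 - Matrix.single a b r
  val_inv := by
    have h2 : Matrix.single a b r * Matrix.single a b r = 0 :=
      by simp [hab.symm]
    rw [mul_sub, mul_one, add_mul, one_mul, h2]
    abel
  inv_val := by
    have h2 : Matrix.single a b r * Matrix.single a b r = 0 :=
      by simp [hab.symm]
    rw [sub_mul, one_mul, mul_add, mul_one, h2]
    abel

/-- `E_d(A)`: the subgroup generated by the elementary matrices. -/
def Egrp (d : ℕ) (A : Type*) [CommRing A] : Subgroup (GL (Fin d) A) :=
  Subgroup.closure {g | ∃ (a b : Fin d) (hab : a ≠ b) (r : A), g = elemGL a b hab r}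

/-- `E_d(A,H)`: the normal closure in `E_d(A)` of the elementary matrices with
parameter in the ideal `H`. -/
def EgrpRel (d : ℕ) (A : Type*) [CommRing A] (H : Ideal A) : Subgroup (GL (Fin d) A) :=
  Subgroup.closure {g | ∃ e ∈ Egrp d A, ∃ (a b : Fin d) (hab : a ≠ b), ∃ r ∈ H,
    g = e * elemGL a b hab r * e⁻¹}

/-- The generic column ideal used in the definitions of `J_{m,u,v}` and `J̃_{m,u,v}`
(with 1-indexed `u ∈ {0,…,n}` and `v` a 0-indexed column, so "`v ≤ u`" reads
`v.val < u`).  `lead` is the leading factor (`𝔄̃_u` resp. `𝔄_n`). -/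
def colIdeal (n m u : ℕ) (lead : Ideal (LaurentR n)) (v : Fin n) : Ideal (LaurentR n) :=
  lead * ((∑ r : Fin n, if r.val < u then augI n * Ideal.span {sg r * muv r m} else 0)
      + augI n * OI n m + OI n m ^ 2)
    + (if v.val < u then
        ∑ r : Fin n, if u ≤ r.val then Ideal.span {sg r ^ 3 * muv r m} else 0
      else
        (∑ r : Fin n, if u ≤ r.val ∧ r ≠ v then Ideal.span {sg r ^ 3 * muv r m} else 0)
          + augI n * Ideal.span {sg v ^ 2 * muv v m})

/-- `𝔄̃_u = Σ_{r=u+1}^n σ_rR_n` (1-indexed `u`). -/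
def augTil (n u : ℕ) : Ideal (LaurentR n) :=
  Ideal.span {x | ∃ r : Fin n, u ≤ r.val ∧ x = sg r}

/-- The ideal `J̃_{m,u,v}`. -/
def Jtil (n m u : ℕ) (v : Fin n) : Ideal (LaurentR n) := colIdeal n m u (augTil n u) v

/-- The ideal `J_{m,u,v}`. -/
def Jfull (n m u : ℕ) (v : Fin n) : Ideal (LaurentR n) := colIdeal n m u (augI n) v

/-- The determinant condition `det = ∏_r x_r^{s_r·m²}`. -/
def detMon (n m : ℕ) (g : IAn n) : Prop :=
  ∃ s : Fin n → ℤ,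
    (matOf g).det = ∏ r : Fin n, ((Xu r ^ (s r * (m : ℤ) ^ 2) : (LaurentR n)ˣ) : LaurentR n)

/-- The set `𝕁̃_{m,u}`. -/
def JmatTil (n m u : ℕ) : Set (IAn n) :=
  {g | (∀ k v, (matOf g - 1) k v ∈ Jtil n m u v) ∧ detMon n m g}

/-- The set `𝕁_{m,u}`. -/
def JmatFull (n m u : ℕ) : Set (IAn n) :=
  {g | (∀ k v, (matOf g - 1) k v ∈ Jfull n m u v) ∧ detMon n m g}

/-- The ideal `J_m = Σ_r σ_r³μ_{r,m}R_n + 𝔄_n²·mR_n + 𝔄_n·m²R_n`. -/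
def JmI (n m : ℕ) : Ideal (LaurentR n) :=
  Ideal.span (Set.range fun r : Fin n => sg r ^ 3 * muv r m)
    + augI n ^ 2 * OI n m + augI n * OI n (m ^ 2)

/-- The free metabelian group `Φ_n = F_n/F_n''`. -/
instance derivedSeries_normal' (G : Type*) [Group G] (n : ℕ) : (derivedSeries G n).Normal :=
  derivedSeries_normal _ _

def Phi (n : ℕ) : Type := FreeGroup (Fin n) ⧸ derivedSeries (FreeGroup (Fin n)) 2

instance (n : ℕ) : Group (Phi n) :=
  inferInstanceAs (Group (FreeGroup (Fin n) ⧸ derivedSeries (FreeGroup (Fin n)) 2))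


namespace Statement2Aux

open Matrix

lemma sg_ne_zero {n : ℕ} (i : Fin n) : sg i ≠ 0 := by
  intro h
  have h1 : Xv i = 1 := by rwa [sg, sub_eq_zero] at h
  have h2 : (AddMonoidAlgebra.single (Finsupp.single i 1) 1 : LaurentR n) = 1 := h1
  rw [AddMonoidAlgebra.one_def] at h2
  have h3 := (AddMonoidAlgebra.single_left_inj (one_ne_zero (α := ℤ))).mp h2
  simp [Finsupp.single_eq_zero] at h3

lemma matOf_mul {n : ℕ} (g h : IAn n) : matOf (g * h) = matOf g * matOf h := rfl

lemma matOf_one {n : ℕ} : matOf (1 : IAn n) = 1 := rfl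

lemma mem_IAn {n : ℕ} (g : IAn n) : matOf g *ᵥ sgVec n = sgVec n := g.2

/-- submatrix of 1 along succAbove is 1. -/
lemma one_submatrix {k : ℕ} (i : Fin (k + 1)) :
    (1 : Matrix (Fin (k + 1)) (Fin (k + 1)) (LaurentR (k + 1))).submatrix
      i.succAbove i.succAbove = 1 := by
  ext a b
  simp [Matrix.one_apply, (Fin.succAbove_right_injective (p := i)).eq_iff]

lemma minor_sub_one {k : ℕ} (i : Fin (k + 1))
    (M : Matrix (Fin (k + 1)) (Fin (k + 1)) (LaurentR (k + 1))) (a b : Fin k) :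
    (M.submatrix i.succAbove i.succAbove - 1) a b = (M - 1) (i.succAbove a) (i.succAbove b) := by
  simp [Matrix.sub_apply, Matrix.one_apply,
    (Fin.succAbove_right_injective (p := i)).eq_iff]

/-- If row `i` of `M` is `e_i`, then `(M*N) i = N i`. -/
lemma row_dot {k : ℕ} (i : Fin (k + 1))
    (M N : Matrix (Fin (k + 1)) (Fin (k + 1)) (LaurentR (k + 1)))
    (hM : ∀ l, M i l = (1 : Matrix (Fin (k + 1)) (Fin (k + 1)) (LaurentR (k + 1))) i l)
    (c : Fin (k + 1)) : (M * N) i c = N i c := by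
  rw [Matrix.mul_apply]
  rw [Finset.sum_congr rfl fun d _ => by rw [hM d]]
  simp [Matrix.one_apply, ite_mul]

/-- Minor of a product, when `N` has `e_i` as its `i`-th row. -/
lemma submatrix_mul_of_row {k : ℕ} (i : Fin (k + 1))
    (M N : Matrix (Fin (k + 1)) (Fin (k + 1)) (LaurentR (k + 1)))
    (hN : ∀ l, N i l = (1 : Matrix (Fin (k + 1)) (Fin (k + 1)) (LaurentR (k + 1))) i l) :
    (M * N).submatrix i.succAbove i.succAbove
      = M.submatrix i.succAbove i.succAbove * N.submatrix i.succAbove i.succAbove := by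
  ext a b
  simp only [Matrix.submatrix_apply, Matrix.mul_apply]
  rw [Fin.sum_univ_succAbove (fun c => M (i.succAbove a) c * N c (i.succAbove b)) i]
  rw [hN (i.succAbove b), Matrix.one_apply_ne (Fin.succAbove_ne i b).symm, mul_zero, zero_add]

/-- The column relation forced by `M *ᵥ σ⃗ = σ⃗`. -/
lemma col_of_mulVec {k : ℕ} (i : Fin (k + 1))
    (M : Matrix (Fin (k + 1)) (Fin (k + 1)) (LaurentR (k + 1)))
    (hM : M *ᵥ sgVec (k + 1) = sgVec (k + 1)) (a : Fin k) :
    sg i * M (i.succAbove a) i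
      = sg (i.succAbove a)
        - ∑ b, M (i.succAbove a) (i.succAbove b) * sg (i.succAbove b) := by
  have h := congrFun hM (i.succAbove a)
  simp only [Matrix.mulVec, dotProduct, sgVec] at h
  rw [Fin.sum_univ_succAbove (fun c => M (i.succAbove a) c * sg c) i] at h
  linear_combination h

/-- row `i` of `M*ᵥσ⃗=σ⃗`-matrices with `e_i` rows + identity minors: product is 1. -/
lemma prod_eq_one {k : ℕ} (i : Fin (k + 1))
    (M N : Matrix (Fin (k + 1)) (Fin (k + 1)) (LaurentR (k + 1)))
    (hMv : M *ᵥ sgVec (k + 1) = sgVec (k + 1))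
    (hNv : N *ᵥ sgVec (k + 1) = sgVec (k + 1))
    (hMrow : ∀ l, M i l = (1 : Matrix (Fin (k + 1)) (Fin (k + 1)) (LaurentR (k + 1))) i l)
    (hNrow : ∀ l, N i l = (1 : Matrix (Fin (k + 1)) (Fin (k + 1)) (LaurentR (k + 1))) i l)
    (hsub : M.submatrix i.succAbove i.succAbove * N.submatrix i.succAbove i.succAbove = 1) :
    M * N = 1 := by
  have hProdv : (M * N) *ᵥ sgVec (k + 1) = sgVec (k + 1) := by
    rw [← Matrix.mulVec_mulVec, hNv, hMv]
  have hsub' : (M * N).submatrix i.succAbove i.succAbove = 1 := by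
    rw [submatrix_mul_of_row i M N hNrow, hsub]
  refine Matrix.ext fun r c => ?_
  rcases eq_or_ne r i with h | hr
  · rw [h, row_dot i M N hMrow c, hNrow c]
  · obtain ⟨a, rfl⟩ := Fin.exists_succAbove_eq hr
    rcases eq_or_ne c i with h | hc
    · rw [h]
      have h0 : sg i * (M * N) (i.succAbove a) i = 0 := by
        rw [col_of_mulVec i (M * N) hProdv a]
        rw [Finset.sum_congr rfl fun b _ => by
          rw [show (M * N) (i.succAbove a) (i.succAbove b)
            = ((M * N).submatrix i.succAbove i.succAbove) a b from rfl, hsub']]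
        simp [Matrix.one_apply, ite_mul, Fin.sum_univ_succAbove]
      have := (mul_eq_zero.mp h0).resolve_left (sg_ne_zero i)
      rw [this, Matrix.one_apply_ne (Fin.succAbove_ne i a)]
    · obtain ⟨b, rfl⟩ := Fin.exists_succAbove_eq hc
      have := congrFun (congrFun hsub' a) b
      simp only [Matrix.submatrix_apply] at this
      rw [this]
      simp [Matrix.one_apply, (Fin.succAbove_right_injective (p := i)).eq_iff]

/-- The lift of a congruence matrix `B` to an `(k+1)×(k+1)` matrix. -/
noncomputable def liftMat {k : ℕ} (i : Fin (k + 1))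
    (B : Matrix (Fin k) (Fin k) (LaurentR (k + 1)))
    (hB : ∀ a b, (B - 1) a b ∈ Ideal.span {sg i}) :
    Matrix (Fin (k + 1)) (Fin (k + 1)) (LaurentR (k + 1)) :=
  Fin.insertNth (α := fun _ => Fin (k + 1) → LaurentR (k + 1)) i
    (fun c => (1 : Matrix (Fin (k + 1)) (Fin (k + 1)) (LaurentR (k + 1))) i c)
    (fun a => Fin.insertNth (α := fun _ => LaurentR (k + 1)) i
      (-∑ b, Classical.choose (Ideal.mem_span_singleton.mp (hB a b)) * sg (i.succAbove b))
      (fun b => B a b))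

lemma liftMat_row {k : ℕ} (i : Fin (k + 1)) (B : Matrix (Fin k) (Fin k) (LaurentR (k + 1)))
    (hB : ∀ a b, (B - 1) a b ∈ Ideal.span {sg i}) (l : Fin (k + 1)) :
    liftMat i B hB i l
      = (1 : Matrix (Fin (k + 1)) (Fin (k + 1)) (LaurentR (k + 1))) i l := by
  simp [liftMat]

lemma liftMat_minor_apply {k : ℕ} (i : Fin (k + 1)) (B : Matrix (Fin k) (Fin k) (LaurentR (k + 1)))
    (hB : ∀ a b, (B - 1) a b ∈ Ideal.span {sg i}) (a b : Fin k) :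
    liftMat i B hB (i.succAbove a) (i.succAbove b) = B a b := by
  simp [liftMat]

lemma liftMat_minor {k : ℕ} (i : Fin (k + 1)) (B : Matrix (Fin k) (Fin k) (LaurentR (k + 1)))
    (hB : ∀ a b, (B - 1) a b ∈ Ideal.span {sg i}) :
    (liftMat i B hB).submatrix i.succAbove i.succAbove = B := by
  exact Matrix.ext fun a b => liftMat_minor_apply i B hB a b

lemma liftMat_col {k : ℕ} (i : Fin (k + 1)) (B : Matrix (Fin k) (Fin k) (LaurentR (k + 1)))
    (hB : ∀ a b, (B - 1) a b ∈ Ideal.span {sg i}) (a : Fin k) :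
    sg i * liftMat i B hB (i.succAbove a) i
      = sg (i.succAbove a) - ∑ b, B a b * sg (i.succAbove b) := by
  have h1 : liftMat i B hB (i.succAbove a) i
      = -∑ b, Classical.choose (Ideal.mem_span_singleton.mp (hB a b)) * sg (i.succAbove b) := by
    simp [liftMat]
  rw [h1, mul_neg, Finset.mul_sum]
  have h2 : ∀ b : Fin k,
      sg i * (Classical.choose (Ideal.mem_span_singleton.mp (hB a b)) * sg (i.succAbove b))
        = (B a b - (1 : Matrix (Fin k) (Fin k) (LaurentR (k + 1))) a b) * sg (i.succAbove b) := by
    intro b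
    rw [← mul_assoc, ← Classical.choose_spec (Ideal.mem_span_singleton.mp (hB a b))]
    rfl
  rw [Finset.sum_congr rfl fun b _ => h2 b]
  simp only [sub_mul, Finset.sum_sub_distrib, Matrix.one_apply, ite_mul, one_mul, zero_mul]
  rw [Finset.sum_ite_eq Finset.univ a (fun b => sg (i.succAbove b))]
  simp

lemma liftMat_mulVec {k : ℕ} (i : Fin (k + 1)) (B : Matrix (Fin k) (Fin k) (LaurentR (k + 1)))
    (hB : ∀ a b, (B - 1) a b ∈ Ideal.span {sg i}) :
    liftMat i B hB *ᵥ sgVec (k + 1) = sgVec (k + 1) := by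
  funext r
  simp only [Matrix.mulVec, dotProduct, sgVec]
  rw [Fin.sum_univ_succAbove (fun c => liftMat i B hB r c * sg c) i]
  rcases eq_or_ne r i with h | hr
  · rw [h]
    rw [Finset.sum_congr rfl fun b _ => by
      rw [liftMat_row i B hB (i.succAbove b),
        Matrix.one_apply_ne (Fin.succAbove_ne i b).symm]]
    rw [liftMat_row i B hB i, Matrix.one_apply_eq]
    simp
  · obtain ⟨a, rfl⟩ := Fin.exists_succAbove_eq hr
    rw [Finset.sum_congr rfl fun b _ => by rw [liftMat_minor_apply i B hB a b]]
    have := liftMat_col i B hB a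
    linear_combination this

end Statement2Aux

open Statement2Aux

/-- For `n = k+1 ≥ 2` and `1 ≤ i ≤ n`, the map `I_n + A ↦ I_{n−1} + A_{i,i}`
(deleting the `i`-th row and column) is a group isomorphism from `IGL_{n−1,i}` onto the
congruence subgroup `GL_{n−1}(R_n, σ_iR_n)`: it is multiplicative on `IGL_{n−1,i}` (which is
closed under multiplication), injective on it, and its image is exactly the set of invertible
`(n−1)×(n−1)` matrices `B` with all entries of `B − I` in `σ_iR_n`. -/
theorem statement_2 (k : ℕ) (hk : 1 ≤ k) (i : Fin (k + 1)) :
    (∀ g ∈ IGLset i, ∀ h ∈ IGLset i, g * h ∈ IGLset i ∧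
        (matOf (g * h)).submatrix i.succAbove i.succAbove =
          (matOf g).submatrix i.succAbove i.succAbove *
            (matOf h).submatrix i.succAbove i.succAbove) ∧
    Set.InjOn (fun g : IAn (k + 1) => (matOf g).submatrix i.succAbove i.succAbove)
      (IGLset i) ∧
    (fun g : IAn (k + 1) => (matOf g).submatrix i.succAbove i.succAbove) '' (IGLset i) =
      {B : Matrix (Fin k) (Fin k) (LaurentR (k + 1)) |
        IsUnit B ∧ ∀ a b, (B - 1) a b ∈ Ideal.span {sg i}} := by
  classical
  have rowOf : ∀ g ∈ IGLset i, ∀ l, matOf g i l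
      = (1 : Matrix (Fin (k + 1)) (Fin (k + 1)) (LaurentR (k + 1))) i l := by
    intro g hg l
    have h := hg.1 l
    rw [Matrix.sub_apply] at h
    exact sub_eq_zero.mp h
  refine ⟨?_, ?_, ?_⟩
  · -- multiplicativity
    intro g hg h hh
    have hgrow := rowOf g hg
    have hhrow := rowOf h hh
    have hmul : (matOf (g * h)).submatrix i.succAbove i.succAbove
        = (matOf g).submatrix i.succAbove i.succAbove
          * (matOf h).submatrix i.succAbove i.succAbove := by
      rw [matOf_mul, submatrix_mul_of_row i _ _ hhrow]
    refine ⟨⟨?_, ?_⟩, hmul⟩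
    · intro l
      rw [matOf_mul, Matrix.sub_apply, row_dot i _ _ hgrow l, hhrow l, sub_self]
    · intro a b
      rw [← minor_sub_one i, hmul]
      have hBg : ∀ a b, ((matOf g).submatrix i.succAbove i.succAbove - 1) a b
          ∈ Ideal.span {sg i} := fun a b => by rw [minor_sub_one i]; exact hg.2 a b
      have hBh : ∀ a b, ((matOf h).submatrix i.succAbove i.succAbove - 1) a b
          ∈ Ideal.span {sg i} := fun a b => by rw [minor_sub_one i]; exact hh.2 a b
      set Bg := (matOf g).submatrix i.succAbove i.succAbove with hBgdef
      set Bh := (matOf h).submatrix i.succAbove i.succAbove with hBhdef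
      have expand : (Bg * Bh - 1) a b = (∑ c, (Bg - 1) a c * Bh c b) + (Bh - 1) a b := by
        simp only [Matrix.sub_apply, Matrix.mul_apply, Matrix.one_apply, sub_mul,
          ite_mul, one_mul, zero_mul, Finset.sum_sub_distrib]
        rw [Finset.sum_ite_eq Finset.univ a fun c => Bh c b]
        simp
      rw [expand]
      exact Ideal.add_mem _
        (Ideal.sum_mem _ fun c _ => Ideal.mul_mem_right _ _ (hBg a c)) (hBh a b)
  · -- injectivity
    intro g hg h hh hequal
    simp only at hequal
    have hmin : ∀ a b, matOf g (i.succAbove a) (i.succAbove b)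
        = matOf h (i.succAbove a) (i.succAbove b) :=
      fun a b => congrFun (congrFun hequal a) b
    have hmat : matOf g = matOf h := by
      refine Matrix.ext fun r c => ?_
      rcases eq_or_ne r i with hri | hri
      · rw [hri, rowOf g hg c, rowOf h hh c]
      · obtain ⟨a, rfl⟩ := Fin.exists_succAbove_eq hri
        rcases eq_or_ne c i with hci | hci
        · rw [hci]
          refine mul_left_cancel₀ (sg_ne_zero i) ?_
          rw [col_of_mulVec i _ (mem_IAn g) a, col_of_mulVec i _ (mem_IAn h) a]
          rw [Finset.sum_congr rfl fun b _ => by rw [hmin a b]]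
        · obtain ⟨b, rfl⟩ := Fin.exists_succAbove_eq hci
          exact hmin a b
    exact Subtype.ext (Units.ext hmat)
  · -- image
    ext B
    simp only [Set.mem_image, Set.mem_setOf_eq]
    constructor
    · rintro ⟨g, hg, rfl⟩
      have hgrow := rowOf g hg
      refine ⟨?_, ?_⟩
      · have h1 : matOf g * matOf g⁻¹ = 1 := by
          rw [← matOf_mul, mul_inv_cancel, matOf_one]
        have hinvrow : ∀ l, matOf g⁻¹ i l
            = (1 : Matrix (Fin (k + 1)) (Fin (k + 1)) (LaurentR (k + 1))) i l :=
          fun l => by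
            have hr := row_dot i (matOf g) (matOf g⁻¹) hgrow l
            rw [h1] at hr
            exact hr.symm
        have h2 : (matOf g).submatrix i.succAbove i.succAbove
            * (matOf g⁻¹).submatrix i.succAbove i.succAbove = 1 := by
          rw [← submatrix_mul_of_row i _ _ hinvrow, h1, one_submatrix]
        exact ⟨⟨_, _, h2, mul_eq_one_comm.mp h2⟩, rfl⟩
      · intro a b
        rw [minor_sub_one i]
        exact hg.2 a b
    · rintro ⟨hU, hB⟩
      obtain ⟨u, hu⟩ := hU
      set C := ((u⁻¹ : _ˣ) : Matrix (Fin k) (Fin k) (LaurentR (k + 1))) with hCdef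
      have hBC : B * C = 1 := by rw [← hu]; exact u.mul_inv
      have hCB : C * B = 1 := by rw [← hu]; exact u.inv_mul
      have hC : ∀ a b, (C - 1) a b ∈ Ideal.span {sg i} := by
        intro a b
        have h1 : C - 1 = C * (1 - B) := by rw [mul_sub, mul_one, hCB]
        rw [h1, Matrix.mul_apply]
        refine Ideal.sum_mem _ fun c _ => Ideal.mul_mem_left _ _ ?_
        have h2 : (1 - B) c b = -((B - 1) c b) := by simp [Matrix.sub_apply]
        rw [h2]
        exact neg_mem (hB c b)
      have hMN : liftMat i B hB * liftMat i C hC = 1 :=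
        prod_eq_one i _ _ (liftMat_mulVec i B hB) (liftMat_mulVec i C hC)
          (liftMat_row i B hB) (liftMat_row i C hC)
          (by rw [liftMat_minor, liftMat_minor, hBC])
      have hNM : liftMat i C hC * liftMat i B hB = 1 :=
        prod_eq_one i _ _ (liftMat_mulVec i C hC) (liftMat_mulVec i B hB)
          (liftMat_row i C hC) (liftMat_row i B hB)
          (by rw [liftMat_minor, liftMat_minor, hCB])
      refine ⟨⟨⟨liftMat i B hB, liftMat i C hC, hMN, hNM⟩, ?_⟩, ⟨?_, ?_⟩, ?_⟩
      · exact liftMat_mulVec i B hB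
      · intro l
        show liftMat i B hB i l - (1 : Matrix _ _ _) i l = 0
        rw [liftMat_row i B hB l, sub_self]
      · intro a b
        show (liftMat i B hB - 1) (i.succAbove a) (i.succAbove b) ∈ Ideal.span {sg i}
        rw [← minor_sub_one i, liftMat_minor]
        exact hB a b
      · exact liftMat_minor i B hB
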